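/- Suppose f : F_2^n → ℝ satisfies ‖f‖_A ≤ M, V ⊆ F_2^n is a subgroup, and δ > 0. Then there exists a subgroup W ⊆ V with dim(W) ≥ dim(V) − M/δ such that Var[f | W + c] ≤ δM for every c ∈ W^⊥ (equivalently, for every coset W + c of W). -/

import Mathlib

open Finset
open scoped Classical

noncomputable def chi {n : ℕ} (a x : Fin n → ZMod 2) : ℝ :=
  if ∑ i, a i * x i = (0 : ZMod 2) then 1 else -1

noncomputable def fhat {n : ℕ} (f : (Fin n → ZMod 2) → ℝ) (a : Fin n → ZMod 2) : ℝ :=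
  (∑ x, f x * chi a x) / 2 ^ n

noncomputable def specNorm {n : ℕ} (f : (Fin n → ZMod 2) → ℝ) : ℝ :=
  ∑ a, |fhat f a|

/-- Average of `f` over the coset `W + c`. -/
noncomputable def cosetAvg {n : ℕ} (f : (Fin n → ZMod 2) → ℝ)
    (W : Submodule (ZMod 2) (Fin n → ZMod 2)) (c : Fin n → ZMod 2) : ℝ :=
  (∑ x ∈ univ.filter (fun x : Fin n → ZMod 2 => x - c ∈ W), f x) /
    (univ.filter (fun x : Fin n → ZMod 2 => x - c ∈ W)).card

/-- Variance of `f` over the coset `W + c`. -/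
noncomputable def cosetVar {n : ℕ} (f : (Fin n → ZMod 2) → ℝ)
    (W : Submodule (ZMod 2) (Fin n → ZMod 2)) (c : Fin n → ZMod 2) : ℝ :=
  cosetAvg (fun x => (f x - cosetAvg f W c) ^ 2) W c

/-! ### Auxiliary definitions -/

def bform {n : ℕ} (a x : Fin n → ZMod 2) : ZMod 2 := ∑ i, a i * x i

noncomputable def cosetF {n : ℕ} (W : Submodule (ZMod 2) (Fin n → ZMod 2))
    (c : Fin n → ZMod 2) : Finset (Fin n → ZMod 2) :=
  univ.filter (fun x => x - c ∈ W)

noncomputable def perpF {n : ℕ} (W : Submodule (ZMod 2) (Fin n → ZMod 2)) :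
    Finset (Fin n → ZMod 2) :=
  univ.filter (fun a => ∀ w ∈ W, bform a w = 0)

noncomputable def Qval {n : ℕ} (f : (Fin n → ZMod 2) → ℝ)
    (W : Submodule (ZMod 2) (Fin n → ZMod 2)) : ℝ :=
  ∑ a ∈ univ \ perpF W, ∑ b ∈ univ \ perpF W,
    (if a + b ∈ perpF W then |fhat f a| * |fhat f b| else 0)

noncomputable def Eval {n : ℕ} (f : (Fin n → ZMod 2) → ℝ)
    (W : Submodule (ZMod 2) (Fin n → ZMod 2)) : ℝ :=
  ∑ a ∈ perpF W, |fhat f a|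

noncomputable def tval {n : ℕ} (f : (Fin n → ZMod 2) → ℝ)
    (W : Submodule (ZMod 2) (Fin n → ZMod 2)) (a : Fin n → ZMod 2) : ℝ :=
  ∑ b ∈ univ \ perpF W, (if a + b ∈ perpF W then |fhat f b| else 0)

/-! ### Basic facts about characters -/

lemma chi_eq {n : ℕ} (a x : Fin n → ZMod 2) : chi a x = if bform a x = 0 then 1 else -1 := rfl

lemma sgn_add (s t : ZMod 2) :
    (if s + t = 0 then (1:ℝ) else -1) = (if s = 0 then (1:ℝ) else -1) * (if t = 0 then (1:ℝ) else -1) := by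
  have h2 : (1:ZMod 2) + 1 = 0 := by decide
  have h01 : ∀ u : ZMod 2, u = 0 ∨ u = 1 := by decide
  rcases h01 s with rfl | rfl <;> rcases h01 t with rfl | rfl <;> norm_num [h2] <;> decide

lemma pi_sub_eq_add {n : ℕ} (x y : Fin n → ZMod 2) : x - y = x + y := by
  funext i
  have h : ∀ t : ZMod 2, -t = t := by decide
  simp [sub_eq_add_neg, h]

lemma pi_add_self {n : ℕ} (x : Fin n → ZMod 2) : x + x = 0 := by
  funext i
  have h : ∀ t : ZMod 2, t + t = 0 := by decide
  simpa using h (x i)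

lemma bform_add_left {n : ℕ} (a b x : Fin n → ZMod 2) :
    bform (a + b) x = bform a x + bform b x := by
  simp [bform, add_mul, Finset.sum_add_distrib]

lemma bform_add_right {n : ℕ} (a x y : Fin n → ZMod 2) :
    bform a (x + y) = bform a x + bform a y := by
  simp [bform, mul_add, Finset.sum_add_distrib]

lemma bform_comm {n : ℕ} (a x : Fin n → ZMod 2) : bform a x = bform x a := by
  simp [bform, mul_comm]

lemma chi_add_right {n : ℕ} (a x y : Fin n → ZMod 2) :
    chi a (x + y) = chi a x * chi a y := by
  rw [chi_eq, chi_eq, chi_eq, bform_add_right, sgn_add]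

lemma chi_add_left {n : ℕ} (a b x : Fin n → ZMod 2) :
    chi (a + b) x = chi a x * chi b x := by
  rw [chi_eq, chi_eq, chi_eq, bform_add_left, sgn_add]

lemma chi_abs {n : ℕ} (a x : Fin n → ZMod 2) : |chi a x| = 1 := by
  rw [chi_eq]; split <;> norm_num

lemma chi_zero_right {n : ℕ} (a : Fin n → ZMod 2) : chi a 0 = 1 := by
  rw [chi_eq]
  simp [bform]

lemma chi_of_bform_eq_zero {n : ℕ} {a x : Fin n → ZMod 2} (h : bform a x = 0) : chi a x = 1 := by
  rw [chi_eq, if_pos h]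

lemma chi_of_bform_ne_zero {n : ℕ} {a x : Fin n → ZMod 2} (h : bform a x ≠ 0) : chi a x = -1 := by
  rw [chi_eq, if_neg h]

lemma exists_bform_ne {n : ℕ} {z : Fin n → ZMod 2} (hz : z ≠ 0) :
    ∃ a, bform a z ≠ 0 := by
  obtain ⟨i, hi⟩ : ∃ i, z i ≠ 0 := by
    by_contra h
    push_neg at h
    exact hz (funext fun i => h i)
  refine ⟨Pi.single i 1, ?_⟩
  have : bform (Pi.single i 1) z = z i := by
    simp [bform, Pi.single_apply, Finset.sum_ite_eq']
  rw [this]; exact hi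

lemma sum_chi_right_eq_zero {n : ℕ} {z : Fin n → ZMod 2} (hz : z ≠ 0) :
    ∑ a, chi a z = 0 := by
  obtain ⟨a₀, ha₀⟩ := exists_bform_ne hz
  have hbij : ∑ a, chi a z = ∑ a, chi (a + a₀) z := by
    exact (Fintype.sum_equiv (Equiv.addRight a₀) _ _ (fun a => rfl)).symm
  have : ∑ a, chi (a + a₀) z = ∑ a, chi a z * chi a₀ z := by
    simp_rw [chi_add_left]
  rw [this, ← Finset.sum_mul, chi_of_bform_ne_zero ha₀] at hbij
  linarith

lemma sum_chi_pair {n : ℕ} (x y : Fin n → ZMod 2) :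
    ∑ a, chi a x * chi a y = if x = y then (2:ℝ)^n else 0 := by
  have hxy : ∀ a, chi a x * chi a y = chi a (x + y) := fun a => (chi_add_right a x y).symm
  simp_rw [hxy]
  by_cases h : x = y
  · subst h
    have hcard : Fintype.card (Fin n → ZMod 2) = 2 ^ n := by simp
    simp [pi_add_self, chi_zero_right, Finset.card_univ, hcard]
  · rw [if_neg h]
    apply sum_chi_right_eq_zero
    intro hc
    apply h
    have := congrArg (· + y) hc
    simpa [add_assoc, pi_add_self] using this

lemma fourier_inversion {n : ℕ} (f : (Fin n → ZMod 2) → ℝ) (x : Fin n → ZMod 2) :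
    f x = ∑ a, fhat f a * chi a x := by
  have h2 : (2:ℝ)^n ≠ 0 := by positivity
  have step1 : ∑ a, fhat f a * chi a x = (∑ a, ∑ y, f y * (chi a y * chi a x)) / 2 ^ n := by
    rw [Finset.sum_div]
    refine Finset.sum_congr rfl fun a _ => ?_
    rw [fhat, div_mul_eq_mul_div, Finset.sum_mul]
    congr 1
    refine Finset.sum_congr rfl fun y _ => by ring
  rw [step1, Finset.sum_comm]
  have step2 : ∀ y, ∑ a, f y * (chi a y * chi a x) = f y * (if y = x then (2:ℝ)^n else 0) := by
    intro y
    rw [← Finset.mul_sum, sum_chi_pair]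
  simp_rw [step2]
  simp_rw [mul_ite, mul_zero]
  rw [Finset.sum_ite_eq' univ x (fun y => f y * (2:ℝ)^n)]
  simp [h2]

/-! ### Cosets -/

lemma mem_cosetF {n : ℕ} {W : Submodule (ZMod 2) (Fin n → ZMod 2)} {c x : Fin n → ZMod 2} :
    x ∈ cosetF W c ↔ x - c ∈ W := by simp [cosetF]

lemma mem_perpF {n : ℕ} {W : Submodule (ZMod 2) (Fin n → ZMod 2)} {a : Fin n → ZMod 2} :
    a ∈ perpF W ↔ ∀ w ∈ W, bform a w = 0 := by simp [perpF]

lemma cosetF_nonempty {n : ℕ} (W : Submodule (ZMod 2) (Fin n → ZMod 2)) (c : Fin n → ZMod 2) :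
    (cosetF W c).Nonempty :=
  ⟨c, mem_cosetF.2 (by simp [W.zero_mem])⟩

lemma cosetF_card_pos {n : ℕ} (W : Submodule (ZMod 2) (Fin n → ZMod 2)) (c : Fin n → ZMod 2) :
    (0:ℝ) < (cosetF W c).card := by
  exact_mod_cast Finset.card_pos.2 (cosetF_nonempty W c)

lemma sum_chi_cosetF {n : ℕ} (W : Submodule (ZMod 2) (Fin n → ZMod 2)) (c a : Fin n → ZMod 2) :
    ∑ x ∈ cosetF W c, chi a x =
      if a ∈ perpF W then ((cosetF W c).card : ℝ) * chi a c else 0 := by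
  by_cases ha : a ∈ perpF W
  · rw [if_pos ha]
    have hterm : ∀ x ∈ cosetF W c, chi a x = chi a c := by
      intro x hx
      have hx' : x - c ∈ W := mem_cosetF.1 hx
      have hxc : x = (x - c) + c := by rw [pi_sub_eq_add, add_assoc, pi_add_self, add_zero]
      rw [hxc, chi_add_right, chi_of_bform_eq_zero (mem_perpF.1 ha _ hx'), one_mul]
    rw [Finset.sum_congr rfl hterm, Finset.sum_const, nsmul_eq_mul]
  · rw [if_neg ha]
    rw [mem_perpF] at ha
    push_neg at ha
    obtain ⟨w, hw, hbw⟩ := ha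
    have key : ∑ x ∈ cosetF W c, chi a x = ∑ x ∈ cosetF W c, chi a (x + w) := by
      refine Finset.sum_nbij' (i := fun x => x + w) (j := fun x => x + w) ?_ ?_ ?_ ?_ ?_
      · intro x hx
        rw [mem_cosetF] at *
        have : x + w - c = (x - c) + w := by
          rw [pi_sub_eq_add, pi_sub_eq_add]; ring
        rw [this]
        exact W.add_mem hx hw
      · intro x hx
        rw [mem_cosetF] at *
        have : x + w - c = (x - c) + w := by
          rw [pi_sub_eq_add, pi_sub_eq_add]; ring
        rw [this]
        exact W.add_mem hx hw
      · intro x _; show x + w + w = x; rw [add_assoc, pi_add_self, add_zero]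
      · intro x _; show x + w + w = x; rw [add_assoc, pi_add_self, add_zero]
      · intro x _
        rw [chi_add_right, chi_add_right, chi_of_bform_ne_zero hbw]
        ring
    have : ∑ x ∈ cosetF W c, chi a (x + w) = -∑ x ∈ cosetF W c, chi a x := by
      simp_rw [chi_add_right, chi_of_bform_ne_zero hbw]
      rw [← Finset.sum_neg_distrib]
      exact Finset.sum_congr rfl fun x _ => by ring
    rw [this] at key
    linarith

lemma cosetAvg_eq {n : ℕ} (f : (Fin n → ZMod 2) → ℝ) (W : Submodule (ZMod 2) (Fin n → ZMod 2))
    (c : Fin n → ZMod 2) :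
    cosetAvg f W c = ∑ a ∈ perpF W, fhat f a * chi a c := by
  have hcard := cosetF_card_pos W c
  have hsum : ∑ x ∈ cosetF W c, f x =
      ((cosetF W c).card : ℝ) * ∑ a ∈ perpF W, fhat f a * chi a c := by
    calc ∑ x ∈ cosetF W c, f x = ∑ x ∈ cosetF W c, ∑ a, fhat f a * chi a x :=
          Finset.sum_congr rfl fun x _ => fourier_inversion f x
      _ = ∑ a, ∑ x ∈ cosetF W c, fhat f a * chi a x := Finset.sum_comm
      _ = ∑ a, fhat f a * ∑ x ∈ cosetF W c, chi a x := by simp_rw [← Finset.mul_sum]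
      _ = ∑ a, fhat f a * (if a ∈ perpF W then ((cosetF W c).card : ℝ) * chi a c else 0) := by
          simp_rw [sum_chi_cosetF]
      _ = ∑ a ∈ perpF W, fhat f a * (((cosetF W c).card : ℝ) * chi a c) := by
          simp_rw [mul_ite, mul_zero]
          rw [Finset.sum_ite_mem, Finset.univ_inter]
      _ = ((cosetF W c).card : ℝ) * ∑ a ∈ perpF W, fhat f a * chi a c := by
          rw [Finset.mul_sum]
          exact Finset.sum_congr rfl fun a _ => by ring
  rw [cosetAvg]
  show (∑ x ∈ cosetF W c, f x) / ((cosetF W c).card : ℝ) = _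
  rw [hsum, mul_div_cancel_left₀ _ (ne_of_gt hcard)]

lemma chi_eq_on_coset {n : ℕ} {W : Submodule (ZMod 2) (Fin n → ZMod 2)} {c a x : Fin n → ZMod 2}
    (ha : a ∈ perpF W) (hx : x ∈ cosetF W c) : chi a x = chi a c := by
  have hx' : x - c ∈ W := mem_cosetF.1 hx
  have hxc : x = (x - c) + c := by rw [pi_sub_eq_add, add_assoc, pi_add_self, add_zero]
  rw [hxc, chi_add_right, chi_of_bform_eq_zero (mem_perpF.1 ha _ hx'), one_mul]

lemma sub_avg_eq {n : ℕ} (f : (Fin n → ZMod 2) → ℝ) (W : Submodule (ZMod 2) (Fin n → ZMod 2))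
    {c x : Fin n → ZMod 2} (hx : x ∈ cosetF W c) :
    f x - cosetAvg f W c = ∑ a ∈ univ \ perpF W, fhat f a * chi a x := by
  have hsplit : ∑ a ∈ univ \ perpF W, (fun a => fhat f a * chi a x) a
      + ∑ a ∈ perpF W, (fun a => fhat f a * chi a x) a = ∑ a, fhat f a * chi a x :=
    Finset.sum_sdiff (Finset.subset_univ _)
  have hP : ∑ a ∈ perpF W, fhat f a * chi a x = cosetAvg f W c := by
    rw [cosetAvg_eq]
    exact Finset.sum_congr rfl fun a ha => by rw [chi_eq_on_coset ha hx]
  have hinv := fourier_inversion f x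
  simp only at hsplit
  linarith [hsplit, hP, hinv]

lemma cosetVar_le_Qval {n : ℕ} (f : (Fin n → ZMod 2) → ℝ)
    (W : Submodule (ZMod 2) (Fin n → ZMod 2)) (c : Fin n → ZMod 2) :
    cosetVar f W c ≤ Qval f W := by
  set D := univ \ perpF W with hD
  set P := perpF W with hP
  set C := cosetF W c with hC
  have hcard := cosetF_card_pos W c
  have hsum : ∑ x ∈ C, (f x - cosetAvg f W c) ^ 2
      = (C.card : ℝ) * ∑ a ∈ D, ∑ b ∈ D,
          (if a + b ∈ P then fhat f a * fhat f b * chi (a+b) c else 0) := by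
    have hexp : ∀ x ∈ C, (f x - cosetAvg f W c) ^ 2
        = ∑ a ∈ D, ∑ b ∈ D, fhat f a * fhat f b * chi (a+b) x := by
      intro x hx
      rw [sq, sub_avg_eq f W hx, Finset.sum_mul_sum]
      refine Finset.sum_congr rfl fun a _ => Finset.sum_congr rfl fun b _ => ?_
      rw [chi_add_left]; ring
    calc ∑ x ∈ C, (f x - cosetAvg f W c) ^ 2
        = ∑ x ∈ C, ∑ a ∈ D, ∑ b ∈ D, fhat f a * fhat f b * chi (a+b) x :=
          Finset.sum_congr rfl hexp
      _ = ∑ a ∈ D, ∑ x ∈ C, ∑ b ∈ D, fhat f a * fhat f b * chi (a+b) x := Finset.sum_comm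
      _ = ∑ a ∈ D, ∑ b ∈ D, ∑ x ∈ C, fhat f a * fhat f b * chi (a+b) x :=
          Finset.sum_congr rfl fun a _ => Finset.sum_comm
      _ = ∑ a ∈ D, ∑ b ∈ D, (C.card : ℝ) *
            (if a + b ∈ P then fhat f a * fhat f b * chi (a+b) c else 0) := by
          refine Finset.sum_congr rfl fun a _ => Finset.sum_congr rfl fun b _ => ?_
          rw [← Finset.mul_sum, sum_chi_cosetF]
          by_cases hab : a + b ∈ P
          · rw [if_pos (show a + b ∈ perpF W from hab), if_pos hab]; ring
          · rw [if_neg (show a + b ∉ perpF W from hab), if_neg hab]; ring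
      _ = (C.card : ℝ) * ∑ a ∈ D, ∑ b ∈ D,
            (if a + b ∈ P then fhat f a * fhat f b * chi (a+b) c else 0) := by
          rw [Finset.mul_sum]
          exact Finset.sum_congr rfl fun a _ => (Finset.mul_sum _ _ _).symm
  have hvar : cosetVar f W c = ∑ a ∈ D, ∑ b ∈ D,
      (if a + b ∈ P then fhat f a * fhat f b * chi (a+b) c else 0) := by
    rw [cosetVar]
    show (∑ x ∈ C, (f x - cosetAvg f W c) ^ 2) / (C.card : ℝ) = _
    rw [hsum, mul_div_cancel_left₀ _ (ne_of_gt hcard)]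
  rw [hvar, Qval, ← hD, ← hP]
  refine Finset.sum_le_sum fun a _ => Finset.sum_le_sum fun b _ => ?_
  by_cases hab : a + b ∈ P
  · rw [if_pos hab, if_pos hab]
    calc fhat f a * fhat f b * chi (a+b) c ≤ |fhat f a * fhat f b * chi (a+b) c| := le_abs_self _
      _ = |fhat f a| * |fhat f b| := by rw [abs_mul, abs_mul, chi_abs, mul_one]
  · rw [if_neg hab, if_neg hab]

/-! ### Energy increment -/

lemma Eval_nonneg {n : ℕ} (f : (Fin n → ZMod 2) → ℝ) (W : Submodule (ZMod 2) (Fin n → ZMod 2)) :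
    0 ≤ Eval f W :=
  Finset.sum_nonneg fun a _ => abs_nonneg _

lemma Eval_le_specNorm {n : ℕ} (f : (Fin n → ZMod 2) → ℝ)
    (W : Submodule (ZMod 2) (Fin n → ZMod 2)) : Eval f W ≤ specNorm f :=
  Finset.sum_le_sum_of_subset_of_nonneg (Finset.subset_univ _)
    (fun a _ _ => abs_nonneg _)

lemma sum_abs_sdiff_le {n : ℕ} (f : (Fin n → ZMod 2) → ℝ)
    (W : Submodule (ZMod 2) (Fin n → ZMod 2)) :
    ∑ a ∈ univ \ perpF W, |fhat f a| ≤ specNorm f :=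
  Finset.sum_le_sum_of_subset_of_nonneg (Finset.subset_univ _)
    (fun a _ _ => abs_nonneg _)

lemma specNorm_nonneg {n : ℕ} (f : (Fin n → ZMod 2) → ℝ) : 0 ≤ specNorm f :=
  Finset.sum_nonneg fun a _ => abs_nonneg _

lemma exists_big_t {n : ℕ} {f : (Fin n → ZMod 2) → ℝ} {M δ : ℝ}
    (hM : specNorm f ≤ M) (hδ : 0 < δ)
    {W : Submodule (ZMod 2) (Fin n → ZMod 2)} (hQ : δ * M < Qval f W) :
    ∃ a ∈ univ \ perpF W, δ < tval f W a := by
  by_contra h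
  push_neg at h
  have hQle : Qval f W ≤ δ * M := by
    have h1 : Qval f W = ∑ a ∈ univ \ perpF W, |fhat f a| * tval f W a := by
      refine Finset.sum_congr rfl fun a _ => ?_
      rw [tval, Finset.mul_sum]
      refine Finset.sum_congr rfl fun b _ => ?_
      split <;> simp
    rw [h1]
    calc ∑ a ∈ univ \ perpF W, |fhat f a| * tval f W a
        ≤ ∑ a ∈ univ \ perpF W, |fhat f a| * δ := by
          refine Finset.sum_le_sum fun a ha => ?_
          exact mul_le_mul_of_nonneg_left (h a ha) (abs_nonneg _)
      _ = δ * ∑ a ∈ univ \ perpF W, |fhat f a| := by rw [← Finset.sum_mul]; ring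
      _ ≤ δ * M := by
          have := (sum_abs_sdiff_le f W).trans hM
          exact mul_le_mul_of_nonneg_left this (le_of_lt hδ)
  linarith

noncomputable def phiMap {n : ℕ} (a : Fin n → ZMod 2) :
    (Fin n → ZMod 2) →ₗ[ZMod 2] ZMod 2 where
  toFun := fun x => bform a x
  map_add' := fun x y => bform_add_right a x y
  map_smul' := fun r x => by
    simp only [RingHom.id_apply]
    simp [bform, Finset.mul_sum, Pi.smul_apply, smul_eq_mul, mul_left_comm]

lemma finrank_step {n : ℕ} (W : Submodule (ZMod 2) (Fin n → ZMod 2)) (a : Fin n → ZMod 2) :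
    Module.finrank (ZMod 2) W ≤
      Module.finrank (ZMod 2) (W ⊓ LinearMap.ker (phiMap a) :
        Submodule (ZMod 2) (Fin n → ZMod 2)) + 1 := by
  classical
  set φ := phiMap (n := n) a
  have hkey := LinearMap.finrank_range_add_finrank_ker (φ.domRestrict W)
  have hker : LinearMap.ker (φ.domRestrict W) =
      Submodule.comap W.subtype (W ⊓ LinearMap.ker φ) := by
    ext x
    simp [LinearMap.mem_ker, Submodule.mem_comap, x.2]
  have hrank2 : Module.finrank (ZMod 2)
      (LinearMap.ker (φ.domRestrict W)) =
      Module.finrank (ZMod 2) (W ⊓ LinearMap.ker φ :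
        Submodule (ZMod 2) (Fin n → ZMod 2)) := by
    rw [hker]
    exact LinearEquiv.finrank_eq (Submodule.comapSubtypeEquivOfLe inf_le_left)
  have hrange : Module.finrank (ZMod 2) (LinearMap.range (φ.domRestrict W)) ≤ 1 := by
    have := Submodule.finrank_le (LinearMap.range (φ.domRestrict W))
    simpa [Module.finrank_self] using this
  rw [hrank2] at hkey
  omega

lemma Eval_step {n : ℕ} (f : (Fin n → ZMod 2) → ℝ) {W : Submodule (ZMod 2) (Fin n → ZMod 2)}
    {a : Fin n → ZMod 2} :
    Eval f W + tval f W a ≤ Eval f (W ⊓ LinearMap.ker (phiMap a)) := by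
  classical
  set W' : Submodule (ZMod 2) (Fin n → ZMod 2) := W ⊓ LinearMap.ker (phiMap a) with hW'
  have hsub1 : perpF W ⊆ perpF W' := by
    intro b hb
    exact mem_perpF.2 fun w hw => mem_perpF.1 hb w (Submodule.mem_inf.1 hw).1
  set S := (univ \ perpF W).filter (fun b => a + b ∈ perpF W) with hS
  have htval : tval f W a = ∑ b ∈ S, |fhat f b| := (Finset.sum_filter _ _).symm
  have hSsub : S ⊆ perpF W' := by
    intro b hb
    rw [hS, Finset.mem_filter, Finset.mem_sdiff] at hb
    obtain ⟨⟨-, hbP⟩, habP⟩ := hb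
    refine mem_perpF.2 fun w hw => ?_
    obtain ⟨hw1, hw2⟩ := Submodule.mem_inf.1 hw
    have h1 : bform a w = 0 := LinearMap.mem_ker.1 hw2
    have h2 : bform (a + b) w = 0 := mem_perpF.1 habP w hw1
    have hb' : b = a + (a + b) := by rw [← add_assoc, pi_add_self, zero_add]
    rw [hb', bform_add_left, h1, h2, add_zero]
  have hdisj : Disjoint (perpF W) S := by
    rw [Finset.disjoint_right]
    intro b hb
    rw [hS, Finset.mem_filter, Finset.mem_sdiff] at hb
    exact hb.1.2
  calc Eval f W + tval f W a = ∑ b ∈ perpF W ∪ S, |fhat f b| := by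
        rw [Finset.sum_union hdisj, Eval, htval]
    _ ≤ Eval f W' :=
        Finset.sum_le_sum_of_subset_of_nonneg (Finset.union_subset hsub1 hSsub)
          (fun b _ _ => abs_nonneg _)

lemma main_rec {n : ℕ} (f : (Fin n → ZMod 2) → ℝ) (M δ : ℝ) (hM : specNorm f ≤ M)
    (hδ : 0 < δ) (V : Submodule (ZMod 2) (Fin n → ZMod 2)) (k : ℕ) :
    ∃ W : Submodule (ZMod 2) (Fin n → ZMod 2), W ≤ V ∧ ∃ j : ℕ,
      (j : ℝ) * δ ≤ Eval f W ∧
      Module.finrank (ZMod 2) V ≤ Module.finrank (ZMod 2) W + j ∧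
      (Qval f W ≤ δ * M ∨ j = k) := by
  induction k with
  | zero => exact ⟨V, le_rfl, 0, by simpa using Eval_nonneg f V, by simp, Or.inr rfl⟩
  | succ k ih =>
    obtain ⟨W, hWV, j, hjE, hdim, hor⟩ := ih
    by_cases hQ : Qval f W ≤ δ * M
    · exact ⟨W, hWV, j, hjE, hdim, Or.inl hQ⟩
    · have hj : j = k := by
        rcases hor with h | h
        · exact absurd h hQ
        · exact h
      push_neg at hQ
      obtain ⟨a, haD, hta⟩ := exists_big_t hM hδ hQ
      refine ⟨W ⊓ LinearMap.ker (phiMap a), le_trans inf_le_left hWV, j + 1, ?_, ?_,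
        Or.inr (by omega)⟩
      · have hstep := Eval_step (a := a) f (W := W)
        push_cast
        linarith
      · have hstep := finrank_step W a
        omega

theorem stmt10 {n : ℕ} (f : (Fin n → ZMod 2) → ℝ) (M δ : ℝ)
    (hM : specNorm f ≤ M) (V : Submodule (ZMod 2) (Fin n → ZMod 2)) (hδ : 0 < δ) :
    ∃ W : Submodule (ZMod 2) (Fin n → ZMod 2), W ≤ V ∧
      (Module.finrank (ZMod 2) W : ℝ) ≥ (Module.finrank (ZMod 2) V : ℝ) - M / δ ∧
      ∀ c : Fin n → ZMod 2, cosetVar f W c ≤ δ * M := by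
  have hM0 : 0 ≤ M := le_trans (specNorm_nonneg f) hM
  set k₀ : ℕ := Nat.floor (M / δ) + 1 with hk₀
  obtain ⟨W, hWV, j, hjE, hdim, hor⟩ := main_rec f M δ hM hδ V k₀
  have hjM : (j : ℝ) ≤ M / δ := by
    rw [le_div_iff₀ hδ]
    calc (j : ℝ) * δ ≤ Eval f W := hjE
      _ ≤ specNorm f := Eval_le_specNorm f W
      _ ≤ M := hM
  have hQ : Qval f W ≤ δ * M := by
    rcases hor with h | h
    · exact h
    · exfalso
      have hlt : M / δ < (k₀ : ℝ) := by
        have := Nat.lt_floor_add_one (M / δ)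
        rw [hk₀]
        push_cast
        linarith
      rw [h] at hjM
      linarith
  refine ⟨W, hWV, ?_, fun c => le_trans (cosetVar_le_Qval f W c) hQ⟩
  have hdim' : (Module.finrank (ZMod 2) V : ℝ) ≤ (Module.finrank (ZMod 2) W : ℝ) + j := by
    exact_mod_cast hdim
  linarith
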